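/- In the setting of Lemma 2 (previous statement, with y_m = X_m β_m + W_m θ_m + ε_m, mean-zero mutually independent W's independent of the errors, E[ε_m] = 0, E[ε_m ε_{m'}ᵀ] = Σ_{mm'}, and R := (y₃ − ŷ₃)ᵀ(ŷ* − ŷ)), suppose the cross-covariances with the third model are nonnegative scalar matrices: Σ₁₃ = σ₁₃ I and Σ₂₃ = σ₂₃ I with σ₁₃ ≥ 0 and σ₂₃ ≥ 0. Then E[R] ≤ 0. -/

import Mathlib

open Matrix MeasureTheory ProbabilityTheory
open scoped BigOperators

/-- The hat matrix `H_A = A (AᵀA)⁻¹ Aᵀ` of a design matrix `A`. -/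
noncomputable def hatMat {n : ℕ} {q : Type*} [Fintype q] [DecidableEq q]
    (A : Matrix (Fin n) q ℝ) : Matrix (Fin n) (Fin n) ℝ :=
  A * (Aᵀ * A)⁻¹ * Aᵀ

lemma hatMat_transpose {n : ℕ} {q : Type*} [Fintype q] [DecidableEq q]
    (A : Matrix (Fin n) q ℝ) : (hatMat A)ᵀ = hatMat A := by
  simp [hatMat, Matrix.transpose_mul, Matrix.transpose_nonsing_inv, Matrix.mul_assoc]

lemma hatMat_mul {n : ℕ} {q : Type*} [Fintype q] [DecidableEq q]
    {A : Matrix (Fin n) q ℝ} (hA : IsUnit (Aᵀ * A)) : hatMat A * A = A := by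
  have h : (Aᵀ * A)⁻¹ * (Aᵀ * A) = 1 :=
    Matrix.nonsing_inv_mul _ ((Matrix.isUnit_iff_isUnit_det _).1 hA)
  calc hatMat A * A = A * ((Aᵀ * A)⁻¹ * (Aᵀ * A)) := by
        simp [hatMat, Matrix.mul_assoc]
    _ = A := by rw [h, Matrix.mul_one]

lemma hatMat_idem {n : ℕ} {q : Type*} [Fintype q] [DecidableEq q]
    {A : Matrix (Fin n) q ℝ} (hA : IsUnit (Aᵀ * A)) : hatMat A * hatMat A = hatMat A := by
  have : hatMat A * hatMat A = (hatMat A * A) * (Aᵀ * A)⁻¹ * Aᵀ := by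
    simp [hatMat, Matrix.mul_assoc]
  rw [this, hatMat_mul hA]; rfl

lemma trace_mul_nonneg_of_proj {n : ℕ} {Pm Q : Matrix (Fin n) (Fin n) ℝ}
    (hPs : Pmᵀ = Pm) (hPi : Pm * Pm = Pm) (hQs : Qᵀ = Q) (hQi : Q * Q = Q) :
    0 ≤ (Pm * Q).trace := by
  have h1 : (Pm * Q).trace = ((Pm * Q) * (Pm * Q)ᵀ).trace := by
    have : (Pm * Q) * (Pm * Q)ᵀ = Pm * ((Q * Q) * Pm) := by
      rw [Matrix.transpose_mul, hPs, hQs]; noncomm_ring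
    rw [this, hQi, Matrix.trace_mul_comm Pm (Q * Pm), Matrix.mul_assoc, hPi, Matrix.trace_mul_comm]
  rw [h1]
  have : ((Pm * Q) * (Pm * Q)ᵀ).trace = ∑ i, ∑ j, (Pm * Q) i j ^ 2 := by
    simp only [Matrix.trace, Matrix.diag, Matrix.mul_apply, Matrix.transpose_apply, sq]
  rw [this]
  exact Finset.sum_nonneg fun i _ => Finset.sum_nonneg fun j _ => sq_nonneg _

lemma integrable_mul_of_L2 {Ω : Type*} [MeasurableSpace Ω] {P : Measure Ω}
    {f g : Ω → ℝ} (hf : MemLp f 2 P) (hg : MemLp g 2 P) :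
    Integrable (fun ω => f ω * g ω) P := by
  have hint : Integrable (fun ω => (f ω ^ 2 + g ω ^ 2) / 2) P :=
    (hf.integrable_sq.add hg.integrable_sq).div_const 2
  refine hint.mono' (hf.1.mul hg.1) ?_
  filter_upwards with ω
  rw [Real.norm_eq_abs, abs_mul]
  nlinarith [sq_nonneg (|f ω| - |g ω|), sq_abs (f ω), sq_abs (g ω), abs_nonneg (f ω), abs_nonneg (g ω)]

set_option maxHeartbeats 1000000 in
lemma sum_sum_eq_dot {n : ℕ} (G : Matrix (Fin n) (Fin n) ℝ) (v w : Fin n → ℝ) :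
    ∑ j, ∑ k, G j k * (v j * w k) = v ⬝ᵥ G.mulVec w := by
  simp only [dotProduct, Matrix.mulVec]
  refine Finset.sum_congr rfl fun j _ => ?_
  rw [Finset.mul_sum]
  exact Finset.sum_congr rfl fun k _ => by ring

lemma dot_mulVec_eq {n : ℕ} (M N : Matrix (Fin n) (Fin n) ℝ) (v w : Fin n → ℝ) :
    M.mulVec v ⬝ᵥ N.mulVec w = ∑ j, ∑ k, (Mᵀ * N) j k * (v j * w k) := by
  rw [sum_sum_eq_dot, ← Matrix.mulVec_mulVec, dotProduct_mulVec v Mᵀ, Matrix.vecMul_transpose]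

set_option maxHeartbeats 2000000 in
/-- **Lemma 2** (inequality conclusion): if the cross-covariances with the third model
are nonnegative scalar matrices, `Σ₁₃ = σ₁₃ I`, `Σ₂₃ = σ₂₃ I`, `σ₁₃, σ₂₃ ≥ 0`,
then `E[R] ≤ 0`. -/
theorem expectation_R_nonpos {n p : ℕ}
    {Ω : Type*} [MeasurableSpace Ω] (P : Measure Ω) [IsProbabilityMeasure P]
    (X : Fin 3 → Matrix (Fin n) (Fin p) ℝ)
    (hXm : ∀ m, IsUnit ((X m)ᵀ * X m))
    (hX : IsUnit ((fromCols (X 0) (X 1))ᵀ * fromCols (X 0) (X 1)))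
    (β θ : Fin 3 → Fin p → ℝ)
    (W : Fin 3 → Ω → Fin n → Fin p → ℝ)
    (ε : Fin 3 → Ω → Fin n → ℝ)
    (Sig : Fin 3 → Fin 3 → Matrix (Fin n) (Fin n) ℝ)
    (σ₁₃ σ₂₃ : ℝ)
    (hWL2 : ∀ m i j, MemLp (fun ω => W m ω i j) 2 P)
    (hWmean : ∀ m i j, ∫ ω, W m ω i j ∂P = 0)
    (hWindep : iIndepFun W P)
    (hWε : IndepFun (fun ω => fun m => W m ω) (fun ω => fun m => ε m ω) P)
    (hεL2 : ∀ m i, MemLp (fun ω => ε m ω i) 2 P)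
    (hεmean : ∀ m i, ∫ ω, ε m ω i ∂P = 0)
    (hcov : ∀ m m' i j, ∫ ω, ε m ω i * ε m' ω j ∂P = Sig m m' i j)
    (hS13 : Sig 0 2 = σ₁₃ • (1 : Matrix (Fin n) (Fin n) ℝ))
    (hS23 : Sig 1 2 = σ₂₃ • (1 : Matrix (Fin n) (Fin n) ℝ))
    (hσ13 : 0 ≤ σ₁₃) (hσ23 : 0 ≤ σ₂₃) :
    let y : Fin 3 → Ω → Fin n → ℝ :=
      fun m ω => (X m).mulVec (β m) + (Matrix.of (W m ω)).mulVec (θ m) + ε m ω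
    let H := hatMat (fromCols (X 0) (X 1))
    let H₁ := hatMat (X 0)
    let H₂ := hatMat (X 1)
    let H₃ := hatMat (X 2)
    (∫ ω, (y 2 ω - H₃.mulVec (y 2 ω)) ⬝ᵥ
        ((H₁.mulVec (y 0 ω) + H₂.mulVec (y 1 ω)) - H.mulVec (y 0 ω + y 1 ω)) ∂P)
      ≤ 0 := by
  intro y H H₁ H₂ H₃
  have hHdef : H = hatMat (fromCols (X 0) (X 1)) := rfl
  have hH1def : H₁ = hatMat (X 0) := rfl
  have hH2def : H₂ = hatMat (X 1) := rfl
  have hH3def : H₃ = hatMat (X 2) := rfl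
  set C := fromCols (X 0) (X 1) with hC
  -- matrix facts
  have hH1X : H₁ * X 0 = X 0 := by rw [hH1def]; exact hatMat_mul (hXm 0)
  have hH2X : H₂ * X 1 = X 1 := by rw [hH2def]; exact hatMat_mul (hXm 1)
  have hHC : H * C = C := by rw [hHdef]; exact hatMat_mul hX
  have hX0C : X 0 = C * fromRows (1 : Matrix (Fin p) (Fin p) ℝ) (0 : Matrix (Fin p) (Fin p) ℝ) := by
    rw [hC, fromCols_mul_fromRows]; simp
  have hX1C : X 1 = C * fromRows (0 : Matrix (Fin p) (Fin p) ℝ) (1 : Matrix (Fin p) (Fin p) ℝ) := by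
    rw [hC, fromCols_mul_fromRows]; simp
  have hHX0 : H * X 0 = X 0 := by
    rw [hX0C, ← Matrix.mul_assoc, hHC]
  have hHX1 : H * X 1 = X 1 := by
    rw [hX1C, ← Matrix.mul_assoc, hHC]
  have hHs : Hᵀ = H := by rw [hHdef]; exact hatMat_transpose _
  have hH1s : H₁ᵀ = H₁ := by rw [hH1def]; exact hatMat_transpose _
  have hH2s : H₂ᵀ = H₂ := by rw [hH2def]; exact hatMat_transpose _
  have hH3s : H₃ᵀ = H₃ := by rw [hH3def]; exact hatMat_transpose _
  have hHi : H * H = H := by rw [hHdef]; exact hatMat_idem hX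
  have hH3i : H₃ * H₃ = H₃ := by rw [hH3def]; exact hatMat_idem (hXm 2)
  have hHH1 : H * H₁ = H₁ := by
    rw [hH1def]; show H * (X 0 * ((X 0)ᵀ * X 0)⁻¹ * (X 0)ᵀ) = _
    rw [← Matrix.mul_assoc, ← Matrix.mul_assoc, hHX0]; rfl
  have hHH2 : H * H₂ = H₂ := by
    rw [hH2def]; show H * (X 1 * ((X 1)ᵀ * X 1)⁻¹ * (X 1)ᵀ) = _
    rw [← Matrix.mul_assoc, ← Matrix.mul_assoc, hHX1]; rfl
  have hH1H : H₁ * H = H₁ := by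
    have := congrArg Matrix.transpose hHH1
    rwa [Matrix.transpose_mul, hHs, hH1s] at this
  have hH2H : H₂ * H = H₂ := by
    have := congrArg Matrix.transpose hHH2
    rwa [Matrix.transpose_mul, hHs, hH2s] at this
  set G₀ := (1 - H₃)ᵀ * (H₁ - H) with hG0
  set G₁ := (1 - H₃)ᵀ * (H₂ - H) with hG1
  -- trace bounds
  have hPs : (1 - H₃)ᵀ = 1 - H₃ := by rw [Matrix.transpose_sub, Matrix.transpose_one, hH3s]
  have hPi : (1 - H₃) * (1 - H₃) = 1 - H₃ := by
    rw [Matrix.sub_mul, Matrix.mul_sub, Matrix.mul_sub, hH3i]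
    simp
  have htrace : ∀ (Hm : Matrix (Fin n) (Fin n) ℝ), Hmᵀ = Hm → Hm * Hm = Hm →
      H * Hm = Hm → Hm * H = Hm → ((1 - H₃)ᵀ * (Hm - H)).trace ≤ 0 := by
    intro Hm hs hi hHHm hHmH
    have hQs : (H - Hm)ᵀ = H - Hm := by rw [Matrix.transpose_sub, hHs, hs]
    have hQi : (H - Hm) * (H - Hm) = H - Hm := by
      rw [Matrix.sub_mul, Matrix.mul_sub, Matrix.mul_sub, hHi, hHHm, hHmH, hi]
      simp
    have h0 : 0 ≤ ((1 - H₃) * (H - Hm)).trace :=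
      trace_mul_nonneg_of_proj hPs hPi hQs hQi
    have : (1 - H₃)ᵀ * (Hm - H) = -((1 - H₃) * (H - Hm)) := by
      rw [hPs]; noncomm_ring
    rw [this, Matrix.trace_neg]
    linarith
  have hT0 : G₀.trace ≤ 0 := htrace H₁ hH1s (by rw [hH1def]; exact hatMat_idem (hXm 0)) hHH1 hH1H
  have hT1 : G₁.trace ≤ 0 := htrace H₂ hH2s (by rw [hH2def]; exact hatMat_idem (hXm 1)) hHH2 hH2H
  -- deterministic means
  set c : Fin 3 → Fin n → ℝ := fun m => (X m).mulVec (β m) with hcdef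
  have hc0 : (H₁ - H).mulVec (c 0) = 0 := by
    rw [hcdef]; show (H₁ - H).mulVec ((X 0).mulVec (β 0)) = 0
    rw [Matrix.mulVec_mulVec, Matrix.sub_mul, hH1X, hHX0, sub_self, Matrix.zero_mulVec]
  have hc1 : (H₂ - H).mulVec (c 1) = 0 := by
    rw [hcdef]; show (H₂ - H).mulVec ((X 1).mulVec (β 1)) = 0
    rw [Matrix.mulVec_mulVec, Matrix.sub_mul, hH2X, hHX1, sub_self, Matrix.zero_mulVec]
  -- probabilistic setup
  set u : Fin 3 → Fin n → Ω → ℝ := fun M i ω => ∑ a, W M ω i a * θ M a with hudef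
  have huL2 : ∀ M i, MemLp (u M i) 2 P := by
    intro M i
    have : u M i = fun ω => ∑ a, θ M a * W M ω i a := by
      funext ω; rw [hudef]; exact Finset.sum_congr rfl fun a _ => mul_comm _ _
    rw [this]
    exact memLp_finset_sum _ fun a _ => (hWL2 M i a).const_mul _
  have hu0 : ∀ M i, ∫ ω, u M i ω ∂P = 0 := by
    intro M i
    rw [hudef]
    rw [integral_finset_sum _ (fun a _ => ((hWL2 M i a).integrable one_le_two).mul_const _)]
    simp [integral_mul_const, hWmean]
  have hεint : ∀ M i, Integrable (fun ω => ε M ω i) P := fun M i => (hεL2 M i).integrable one_le_two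
  have huint : ∀ M i, Integrable (u M i) P := fun M i => (huL2 M i).integrable one_le_two
  have hyval : ∀ M ω i, y M ω i = c M i + (u M i ω + ε M ω i) := by
    intro M ω i
    show (X M).mulVec (β M) i + (Matrix.of (W M ω)).mulVec (θ M) i + ε M ω i = _
    rw [add_assoc]
    rfl
  have hyL2 : ∀ M i, MemLp (fun ω => y M ω i) 2 P := by
    intro M i
    have : (fun ω => y M ω i) = fun ω => c M i + (u M i ω + ε M ω i) := by
      funext ω; exact hyval M ω i
    rw [this]
    exact (memLp_const (μ := P) (p := 2) (c M i)).add ((huL2 M i).add (hεL2 M i))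
  -- vanishing cross moments
  have hWW : ∀ (m : Fin 3), m ≠ 2 → ∀ j a k b, ∫ ω, W 2 ω j a * W m ω k b ∂P = 0 := by
    intro m hm j a k b
    have h2 : IndepFun (W 2) (W m) P := hWindep.indepFun (Ne.symm hm)
    have hind : IndepFun (fun ω => W 2 ω j a) (fun ω => W m ω k b) P :=
      h2.comp ((measurable_pi_apply a).comp (measurable_pi_apply j))
        ((measurable_pi_apply b).comp (measurable_pi_apply k))
    have := hind.integral_mul_eq_mul_integral ((hWL2 2 j a).integrable one_le_two).1
      ((hWL2 m k b).integrable one_le_two).1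
    simpa [Pi.mul_apply, hWmean] using this
  have hWE : ∀ (m m' : Fin 3) j a k, ∫ ω, W m ω j a * ε m' ω k ∂P = 0 := by
    intro m m' j a k
    have hφ : Measurable (fun f : Fin 3 → Fin n → Fin p → ℝ => f m j a) :=
      (measurable_pi_apply a).comp ((measurable_pi_apply j).comp (measurable_pi_apply m))
    have hψ : Measurable (fun f : Fin 3 → Fin n → ℝ => f m' k) :=
      (measurable_pi_apply k).comp (measurable_pi_apply m')
    have hind : IndepFun (fun ω => W m ω j a) (fun ω => ε m' ω k) P := hWε.comp hφ hψ
    have := hind.integral_mul_eq_mul_integral ((hWL2 m j a).integrable one_le_two).1 (hεint m' k).1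
    simpa [Pi.mul_apply, hWmean] using this
  have hEW : ∀ (m m' : Fin 3) j k b, ∫ ω, ε m ω j * W m' ω k b ∂P = 0 := by
    intro m m' j k b
    have hφ : Measurable (fun f : Fin 3 → Fin n → ℝ => f m j) :=
      (measurable_pi_apply j).comp (measurable_pi_apply m)
    have hψ : Measurable (fun f : Fin 3 → Fin n → Fin p → ℝ => f m' k b) :=
      (measurable_pi_apply b).comp ((measurable_pi_apply k).comp (measurable_pi_apply m'))
    have hind : IndepFun (fun ω => ε m ω j) (fun ω => W m' ω k b) P := hWε.symm.comp hφ hψ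
    have := hind.integral_mul_eq_mul_integral (hεint m j).1 ((hWL2 m' k b).integrable one_le_two).1
    simpa [Pi.mul_apply, hWmean] using this
  -- key cross expectation
  have hkey : ∀ (m : Fin 3), m ≠ 2 → ∀ j k,
      (∫ ω, y 2 ω j * y m ω k ∂P) = c 2 j * c m k + Sig 2 m j k := by
    intro m hm j k
    have huu : ∫ ω, u 2 j ω * u m k ω ∂P = 0 := by
      have hexp : (fun ω => u 2 j ω * u m k ω)
          = fun ω => ∑ a, ∑ b, (θ 2 a * θ m b) * (W 2 ω j a * W m ω k b) := by
        funext ω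
        rw [hudef]
        rw [Finset.sum_mul_sum]
        exact Finset.sum_congr rfl fun a _ => Finset.sum_congr rfl fun b _ => by ring
      rw [hexp]
      rw [integral_finset_sum _ (fun a _ => integrable_finset_sum _ fun b _ =>
        (integrable_mul_of_L2 (hWL2 2 j a) (hWL2 m k b)).const_mul _)]
      refine Finset.sum_eq_zero fun a _ => ?_
      rw [integral_finset_sum _ (fun b _ =>
        (integrable_mul_of_L2 (hWL2 2 j a) (hWL2 m k b)).const_mul _)]
      refine Finset.sum_eq_zero fun b _ => ?_
      rw [integral_const_mul, hWW m hm j a k b, mul_zero]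
    have huε : ∫ ω, u 2 j ω * ε m ω k ∂P = 0 := by
      have hexp : (fun ω => u 2 j ω * ε m ω k)
          = fun ω => ∑ a, θ 2 a * (W 2 ω j a * ε m ω k) := by
        funext ω; rw [hudef]; rw [Finset.sum_mul]
        exact Finset.sum_congr rfl fun a _ => by ring
      rw [hexp, integral_finset_sum _ (fun a _ =>
        (integrable_mul_of_L2 (hWL2 2 j a) (hεL2 m k)).const_mul _)]
      refine Finset.sum_eq_zero fun a _ => ?_
      rw [integral_const_mul, hWE 2 m j a k, mul_zero]
    have hεu : ∫ ω, ε 2 ω j * u m k ω ∂P = 0 := by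
      have hexp : (fun ω => ε 2 ω j * u m k ω)
          = fun ω => ∑ b, θ m b * (ε 2 ω j * W m ω k b) := by
        funext ω; rw [hudef]; rw [Finset.mul_sum]
        exact Finset.sum_congr rfl fun b _ => by ring
      rw [hexp, integral_finset_sum _ (fun b _ =>
        (integrable_mul_of_L2 (hεL2 2 j) (hWL2 m k b)).const_mul _)]
      refine Finset.sum_eq_zero fun b _ => ?_
      rw [integral_const_mul, hEW 2 m j k b, mul_zero]
    have hzz : ∫ ω, (u 2 j ω + ε 2 ω j) * (u m k ω + ε m ω k) ∂P = Sig 2 m j k := by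
      have hexp : (fun ω => (u 2 j ω + ε 2 ω j) * (u m k ω + ε m ω k))
          = fun ω => u 2 j ω * u m k ω + u 2 j ω * ε m ω k
              + (ε 2 ω j * u m k ω + ε 2 ω j * ε m ω k) := by
        funext ω; ring
      have hI1 : Integrable (fun ω => u 2 j ω * u m k ω + u 2 j ω * ε m ω k) P :=
        (integrable_mul_of_L2 (huL2 2 j) (huL2 m k)).add
          (integrable_mul_of_L2 (huL2 2 j) (hεL2 m k))
      have hI2 : Integrable (fun ω => ε 2 ω j * u m k ω + ε 2 ω j * ε m ω k) P :=
        (integrable_mul_of_L2 (hεL2 2 j) (huL2 m k)).add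
          (integrable_mul_of_L2 (hεL2 2 j) (hεL2 m k))
      rw [hexp]
      rw [integral_add hI1 hI2,
        integral_add (integrable_mul_of_L2 (huL2 2 j) (huL2 m k))
          (integrable_mul_of_L2 (huL2 2 j) (hεL2 m k)),
        integral_add (integrable_mul_of_L2 (hεL2 2 j) (huL2 m k))
          (integrable_mul_of_L2 (hεL2 2 j) (hεL2 m k)),
        huu, huε, hεu, hcov 2 m j k]
      ring
    have hexp : (fun ω => y 2 ω j * y m ω k)
        = fun ω => c 2 j * c m k + c 2 j * (u m k ω + ε m ω k)
            + ((u 2 j ω + ε 2 ω j) * c m k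
              + (u 2 j ω + ε 2 ω j) * (u m k ω + ε m ω k)) := by
      funext ω; rw [hyval 2 ω j, hyval m ω k]; ring
    have hz2 : Integrable (fun ω => u 2 j ω + ε 2 ω j) P := (huint 2 j).add (hεint 2 j)
    have hzm : Integrable (fun ω => u m k ω + ε m ω k) P := (huint m k).add (hεint m k)
    have hzzint : Integrable (fun ω => (u 2 j ω + ε 2 ω j) * (u m k ω + ε m ω k)) P :=
      integrable_mul_of_L2 ((huL2 2 j).add (hεL2 2 j)) ((huL2 m k).add (hεL2 m k))
    have hz0m : ∫ ω, (u m k ω + ε m ω k) ∂P = 0 := by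
      rw [integral_add (huint m k) (hεint m k), hu0, hεmean, add_zero]
    have hz02 : ∫ ω, (u 2 j ω + ε 2 ω j) ∂P = 0 := by
      rw [integral_add (huint 2 j) (hεint 2 j), hu0, hεmean, add_zero]
    have hK0 : Integrable (fun ω => c 2 j * (u m k ω + ε m ω k)) P := hzm.const_mul _
    have hK1 : Integrable (fun ω => (u 2 j ω + ε 2 ω j) * c m k) P := hz2.mul_const _
    have hJ1 : Integrable (fun ω => c 2 j * c m k + c 2 j * (u m k ω + ε m ω k)) P :=
      (integrable_const _).add hK0
    have hJ2 : Integrable (fun ω => (u 2 j ω + ε 2 ω j) * c m k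
        + (u 2 j ω + ε 2 ω j) * (u m k ω + ε m ω k)) P := hK1.add hzzint
    rw [hexp]
    rw [integral_add hJ1 hJ2,
      integral_add (integrable_const _) hK0,
      integral_add hK1 hzzint,
      hzz, integral_const, integral_const_mul, hz0m, integral_mul_const, hz02]
    simp
  -- the Sig entries
  have hSig20 : ∀ j k, Sig 2 0 j k = σ₁₃ * (if j = k then 1 else 0) := by
    intro j k
    have h1 : Sig 2 0 j k = ∫ ω, ε 2 ω j * ε 0 ω k ∂P := (hcov 2 0 j k).symm
    have h2 : (∫ ω, ε 2 ω j * ε 0 ω k ∂P) = ∫ ω, ε 0 ω k * ε 2 ω j ∂P := by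
      congr 1; funext ω; ring
    rw [h1, h2, hcov 0 2 k j, hS13]
    rcases eq_or_ne j k with h | h
    · subst h; simp [Matrix.one_apply]
    · simp [Matrix.one_apply, h, Ne.symm h]
  have hSig21 : ∀ j k, Sig 2 1 j k = σ₂₃ * (if j = k then 1 else 0) := by
    intro j k
    have h1 : Sig 2 1 j k = ∫ ω, ε 2 ω j * ε 1 ω k ∂P := (hcov 2 1 j k).symm
    have h2 : (∫ ω, ε 2 ω j * ε 1 ω k ∂P) = ∫ ω, ε 1 ω k * ε 2 ω j ∂P := by
      congr 1; funext ω; ring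
    rw [h1, h2, hcov 1 2 k j, hS23]
    rcases eq_or_ne j k with h | h
    · subst h; simp [Matrix.one_apply]
    · simp [Matrix.one_apply, h, Ne.symm h]
  -- pointwise rewriting of the integrand
  have hpoint : ∀ ω, (y 2 ω - H₃.mulVec (y 2 ω)) ⬝ᵥ
      ((H₁.mulVec (y 0 ω) + H₂.mulVec (y 1 ω)) - H.mulVec (y 0 ω + y 1 ω))
      = (∑ j, ∑ k, G₀ j k * (y 2 ω j * y 0 ω k))
        + ∑ j, ∑ k, G₁ j k * (y 2 ω j * y 1 ω k) := by
    intro ω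
    have e1 : y 2 ω - H₃.mulVec (y 2 ω) = (1 - H₃).mulVec (y 2 ω) := by
      rw [Matrix.sub_mulVec, Matrix.one_mulVec]
    have e2 : ∀ (v₀ v₁ : Fin n → ℝ), (H₁.mulVec v₀ + H₂.mulVec v₁) - H.mulVec (v₀ + v₁)
        = (H₁ - H).mulVec v₀ + (H₂ - H).mulVec v₁ := by
      intro v₀ v₁
      rw [Matrix.mulVec_add, Matrix.sub_mulVec, Matrix.sub_mulVec]
      abel
    rw [e1, e2 (y 0 ω) (y 1 ω), dotProduct_add, dot_mulVec_eq, dot_mulVec_eq, hG0, hG1]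
  have hyint2 : ∀ (m : Fin 3) j k, Integrable (fun ω => y 2 ω j * y m ω k) P :=
    fun m j k => integrable_mul_of_L2 (hyL2 2 j) (hyL2 m k)
  have hSint : ∀ (G : Matrix (Fin n) (Fin n) ℝ) (m : Fin 3),
      Integrable (fun ω => ∑ j, ∑ k, G j k * (y 2 ω j * y m ω k)) P :=
    fun G m => integrable_finset_sum _ fun j _ => integrable_finset_sum _ fun k _ =>
      (hyint2 m j k).const_mul _
  have hS : ∀ (G : Matrix (Fin n) (Fin n) ℝ) (m : Fin 3),
      (∫ ω, ∑ j, ∑ k, G j k * (y 2 ω j * y m ω k) ∂P)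
        = ∑ j, ∑ k, G j k * ∫ ω, y 2 ω j * y m ω k ∂P := by
    intro G m
    rw [integral_finset_sum _ (fun j _ => integrable_finset_sum _ fun k _ =>
      (hyint2 m j k).const_mul (G j k))]
    refine Finset.sum_congr rfl fun j _ => ?_
    rw [integral_finset_sum _ (fun k _ => (hyint2 m j k).const_mul _)]
    exact Finset.sum_congr rfl fun k _ => integral_const_mul _ _
  have split : ∀ (G : Matrix (Fin n) (Fin n) ℝ) (cm : Fin n → ℝ) (σ : ℝ),
      (∑ j, ∑ k, G j k * (c 2 j * cm k + σ * (if j = k then 1 else 0)))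
        = (∑ j, ∑ k, G j k * (c 2 j * cm k)) + σ * G.trace := by
    intro G cm σ
    have hrow : ∀ j, (∑ k, G j k * (c 2 j * cm k + σ * (if j = k then 1 else 0)))
        = (∑ k, G j k * (c 2 j * cm k)) + G j j * σ := by
      intro j
      have : (∑ k, G j k * (c 2 j * cm k + σ * (if j = k then 1 else 0)))
          = ∑ k, (G j k * (c 2 j * cm k) + (if j = k then G j k * σ else 0)) :=
        Finset.sum_congr rfl fun k _ => by by_cases h : j = k <;> simp [h] <;> ring
      rw [this, Finset.sum_add_distrib, Finset.sum_ite_eq]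
      simp
    rw [Finset.sum_congr rfl fun j _ => hrow j, Finset.sum_add_distrib, Matrix.trace]
    simp only [Matrix.diag]
    rw [Finset.mul_sum]
    congr 1
    exact Finset.sum_congr rfl fun j _ => mul_comm _ _
  have hzero0 : (∑ j, ∑ k, G₀ j k * (c 2 j * c 0 k)) = 0 := by
    rw [sum_sum_eq_dot, hG0, ← Matrix.mulVec_mulVec, hc0, Matrix.mulVec_zero,
      dotProduct_zero]
  have hzero1 : (∑ j, ∑ k, G₁ j k * (c 2 j * c 1 k)) = 0 := by
    rw [sum_sum_eq_dot, hG1, ← Matrix.mulVec_mulVec, hc1, Matrix.mulVec_zero,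
      dotProduct_zero]
  have hmain : (∫ ω, (y 2 ω - H₃.mulVec (y 2 ω)) ⬝ᵥ
      ((H₁.mulVec (y 0 ω) + H₂.mulVec (y 1 ω)) - H.mulVec (y 0 ω + y 1 ω)) ∂P)
      = σ₁₃ * G₀.trace + σ₂₃ * G₁.trace := by
    simp only [hpoint]
    rw [integral_add (hSint G₀ 0) (hSint G₁ 1), hS G₀ 0, hS G₁ 1]
    simp only [hkey 0 (by decide), hkey 1 (by decide), hSig20, hSig21]
    rw [split G₀ (c 0) σ₁₃, split G₁ (c 1) σ₂₃, hzero0, hzero1, zero_add, zero_add]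
  rw [hmain]
  nlinarith [hT0, hT1, hσ13, hσ23]
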